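/- For every set mapping f on a set S of size n (i.e., f assigns to each proper subset A ⊊ S an element f(A) ∉ A), if m ≤ log₂ n then there exists a subset T ⊂ S with |T| = m such that the union of f(X) over all subsets X ⊆ T is not all of S. Equivalently, H(n) > log₂ n. -/

import Mathlib

/-- For every set mapping `f` on an `n`-element set (`f A ∉ A` for every proper subset
`A`), if `m ≤ log₂ n` then there is a proper subset `T` of size `m` whose family of
subsets does not have all of `S` as the union of their images: `H(n) > log₂ n`. -/
theorem set_mapping_lower_bound (n m : ℕ) (hn : 2 ≤ n)
    (f : Finset (Fin n) → Fin n) (hf : ∀ A, A ≠ Finset.univ → f A ∉ A)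
    (hm : (m : ℝ) ≤ Real.logb 2 n) :
    ∃ T : Finset (Fin n), T ≠ Finset.univ ∧ T.card = m ∧
      ∃ s : Fin n, ∀ X ⊆ T, f X ≠ s := by
  have hn0 : (0:ℝ) < n := by exact_mod_cast Nat.lt_of_lt_of_le (by norm_num) hn
  have h2m : 2 ^ m ≤ n := by
    have h1 : (2:ℝ) ^ (m:ℝ) ≤ (2:ℝ) ^ (Real.logb 2 n) :=
      Real.rpow_le_rpow_of_exponent_le one_le_two hm
    rw [Real.rpow_logb (by norm_num) (by norm_num) hn0, Real.rpow_natCast] at h1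
    exact_mod_cast h1
  have hmn : m < n := lt_of_lt_of_le (Nat.lt_two_pow_self (n := m)) h2m
  by_contra hcon
  push_neg at hcon
  -- hcon : ∀ T, T ≠ univ → T.card = m → ∀ s, ∃ X ⊆ T, f X = s
  have huniv : (Finset.univ : Finset (Fin n)).card = n := by simp
  rcases lt_or_eq_of_le h2m with hlt | heq
  · -- case 2^m < n : any T of size m works
    obtain ⟨T, -, hTcard⟩ := Finset.exists_subset_card_eq (s := (Finset.univ : Finset (Fin n))) (n := m)
      (by omega)
    have hTne : T ≠ Finset.univ := by
      intro h; rw [h, huniv] at hTcard; omega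
    have hI : (T.powerset.image f).card < n := by
      calc (T.powerset.image f).card ≤ T.powerset.card := Finset.card_image_le
        _ = 2 ^ m := by rw [Finset.card_powerset, hTcard]
        _ < n := hlt
    have : ∃ s, s ∉ T.powerset.image f := by
      by_contra h; push_neg at h
      have : Finset.image f T.powerset = Finset.univ := Finset.eq_univ_iff_forall.mpr h
      rw [this, huniv] at hI; omega
    obtain ⟨s, hs⟩ := this
    obtain ⟨X, hXT, hXf⟩ := hcon T hTne hTcard s
    exact hs (Finset.mem_image.mpr ⟨X, Finset.mem_powerset.mpr hXT, hXf⟩)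
  · -- case 2^m = n
    obtain ⟨k, rfl⟩ : ∃ k, m = k + 1 := by
      rcases m with _ | k
      · simp at heq; omega
      · exact ⟨k, rfl⟩
    obtain ⟨K, -, hKcard⟩ := Finset.exists_subset_card_eq (s := (Finset.univ : Finset (Fin n))) (n := k)
      (by omega)
    set I := K.powerset.image f with hIdef
    have hIcard : I.card ≤ 2 ^ k := by
      calc I.card ≤ K.powerset.card := Finset.card_image_le
        _ = 2 ^ k := by rw [Finset.card_powerset, hKcard]
    set R := Finset.univ \ I with hRdef
    have hRK : R ⊆ K := by
      intro r hr
      rw [hRdef, Finset.mem_sdiff] at hr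
      by_contra hrK
      set T := insert r K with hTdef
      have hTcard : T.card = k + 1 := by
        rw [hTdef, Finset.card_insert_of_notMem hrK, hKcard]
      have hTne : T ≠ Finset.univ := by
        intro h; rw [h, huniv] at hTcard; omega
      obtain ⟨X, hXT, hXf⟩ := hcon T hTne hTcard r
      have hXne : X ≠ Finset.univ := by
        intro h
        exact hTne (Finset.univ_subset_iff.mp (h ▸ hXT))
      by_cases hrX : r ∈ X
      · exact hf X hXne (hXf ▸ hrX)
      · have hXK : X ⊆ K := by
          intro x hx
          rcases Finset.mem_insert.mp (hXT hx) with h | h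
          · exact absurd (h ▸ hx) hrX
          · exact h
        exact hr.2 (Finset.mem_image.mpr ⟨X, Finset.mem_powerset.mpr hXK, hXf⟩)
    have hRcard : R.card = n - I.card := by
      rw [hRdef, Finset.card_sdiff_of_subset (Finset.subset_univ I), huniv]
    have hn2 : n = 2 ^ k + 2 ^ k := by
      rw [← heq, pow_succ]; ring
    have h1 : 2 ^ k ≤ R.card := by omega
    have h2 : R.card ≤ k := hKcard ▸ Finset.card_le_card hRK
    have := Nat.lt_two_pow_self (n := k)
    omega
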